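/- For k ≥ p1 and any h ≥ 1, the direct-predictor constant satisfies f_{2,h}(k+1) > f_{2,h}(k): concretely, tr(Γ⁻¹(k+1)·cov(Σ_{j=0}^{h−1} b_j x_j(k+1))) > tr(Γ⁻¹(k)·cov(Σ_{j=0}^{h−1} b_j x_j(k))), where Γ(k) = E(x_1(k)x_1(k)') is the autocovariance matrix. -/

import Mathlib

open MeasureTheory Finset

/-- For a stationary zero-mean AR(p1) process with uncorrelated innovations
of variance `σ2`, MA coefficients `b` (power-series coefficients of `1/A(z)`, `b 0 = 1`),
autocovariance function `γ`, autocovariance matrices `Γ(m)` (positive definite) and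
covariance matrices `C(m)` of `∑_{j<h} b_j x_j(m)`, we have for every `k ≥ p1` and `h ≥ 1`
that the direct-predictor constant is strictly increasing:
`f_{2,h}(k) = tr(Γ(k)⁻¹ C(k))σ2 < tr(Γ(k+1)⁻¹ C(k+1))σ2 = f_{2,h}(k+1)`. -/
theorem stmt_11 {Ω : Type*} [MeasurableSpace Ω] (μ : Measure Ω) [IsProbabilityMeasure μ]
    (p1 k h : ℕ) (hp1 : 1 ≤ p1) (hk : p1 ≤ k) (hh : 1 ≤ h)
    (a : ℕ → ℝ) (hap1 : a p1 ≠ 0) (hazero : ∀ i, p1 < i → a i = 0)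
    (σ2 : ℝ) (hσ : 0 < σ2)
    (x ε : ℤ → Ω → ℝ)
    (hint : ∀ s t : ℤ, Integrable (fun ω => x s ω * x t ω) μ)
    (hAR : ∀ t : ℤ, ∀ᵐ ω ∂μ,
      x (t + 1) ω = (∑ i ∈ Finset.Icc 1 p1, a i * x (t + 1 - (i : ℤ)) ω) + ε (t + 1) ω)
    (hmean : ∀ t : ℤ, ∫ ω, x t ω ∂μ = 0)
    (hεmean : ∀ t : ℤ, ∫ ω, ε t ω ∂μ = 0)
    (hεvar : ∀ t : ℤ, ∫ ω, (ε t ω) ^ 2 ∂μ = σ2)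
    (hεuncorr : ∀ s t : ℤ, s ≠ t → ∫ ω, ε s ω * ε t ω ∂μ = 0)
    (γ : ℤ → ℝ) (hγ : ∀ s t : ℤ, ∫ ω, x s ω * x t ω ∂μ = γ (s - t))
    (b : ℕ → ℝ) (hb0 : b 0 = 1)
    (hb : ∀ n : ℕ, 1 ≤ n →
      b n = ∑ i ∈ Finset.Icc 1 p1, if i ≤ n then a i * b (n - i) else 0)
    (Γ : ∀ m : ℕ, Matrix (Fin m) (Fin m) ℝ)
    (hΓ : ∀ m, Γ m = fun (i j : Fin m) => γ (((j : ℕ) : ℤ) - ((i : ℕ) : ℤ)))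
    (hpd : (Γ k).PosDef) (hpd' : (Γ (k + 1)).PosDef)
    (C : ∀ m : ℕ, Matrix (Fin m) (Fin m) ℝ)
    (hC : ∀ m, C m = fun (i j : Fin m) => ∑ r ∈ Finset.range h, ∑ s ∈ Finset.range h,
      b r * b s * γ ((((r : ℤ) - ((i : ℕ) : ℤ)) - ((s : ℤ) - ((j : ℕ) : ℤ))))) :
    Matrix.trace ((Γ k)⁻¹ * C k) * σ2 < Matrix.trace ((Γ (k + 1))⁻¹ * C (k + 1)) * σ2 := by
  classical
  -- γ is even
  have hγeven : ∀ n : ℤ, γ (-n) = γ n := by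
    intro n
    have h1 := hγ 0 n
    have h2 := hγ n 0
    rw [zero_sub] at h1
    rw [sub_zero] at h2
    rw [← h1, ← h2]
    exact integral_congr_ae (Filter.Eventually.of_forall fun ω => mul_comm _ _)
  -- integrability of products of finite linear combinations
  have keyInt : ∀ {ι κ : Type} (S : Finset ι) (T : Finset κ) (c : ι → ℝ) (e : κ → ℝ)
      (s : ι → ℤ) (t : κ → ℤ),
      Integrable (fun ω => (∑ α ∈ S, c α * x (s α) ω) * (∑ β ∈ T, e β * x (t β) ω)) μ := by
    intro ι κ S T c e s t
    have hrw : (fun ω => (∑ α ∈ S, c α * x (s α) ω) * (∑ β ∈ T, e β * x (t β) ω))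
        = fun ω => ∑ α ∈ S, ∑ β ∈ T, (c α * e β) * (x (s α) ω * x (t β) ω) := by
      funext ω
      rw [Finset.sum_mul_sum]
      exact Finset.sum_congr rfl fun α _ => Finset.sum_congr rfl fun β _ => by ring
    rw [hrw]
    exact integrable_finset_sum _ fun α _ =>
      integrable_finset_sum _ fun β _ => (hint (s α) (t β)).const_mul _
  -- integrals of products of finite linear combinations
  have key : ∀ {ι κ : Type} (S : Finset ι) (T : Finset κ) (c : ι → ℝ) (e : κ → ℝ)
      (s : ι → ℤ) (t : κ → ℤ),
      ∫ ω, (∑ α ∈ S, c α * x (s α) ω) * (∑ β ∈ T, e β * x (t β) ω) ∂μ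
        = ∑ α ∈ S, ∑ β ∈ T, c α * e β * γ (s α - t β) := by
    intro ι κ S T c e s t
    have hrw : (fun ω => (∑ α ∈ S, c α * x (s α) ω) * (∑ β ∈ T, e β * x (t β) ω))
        = fun ω => ∑ α ∈ S, ∑ β ∈ T, (c α * e β) * (x (s α) ω * x (t β) ω) := by
      funext ω
      rw [Finset.sum_mul_sum]
      exact Finset.sum_congr rfl fun α _ => Finset.sum_congr rfl fun β _ => by ring
    rw [hrw, integral_finset_sum _ (fun α _ =>
      integrable_finset_sum _ fun β _ => (hint (s α) (t β)).const_mul _)]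
    refine Finset.sum_congr rfl fun α _ => ?_
    rw [integral_finset_sum _ (fun β _ => (hint (s α) (t β)).const_mul _)]
    refine Finset.sum_congr rfl fun β _ => ?_
    rw [integral_const_mul, hγ]
  -- the AR coefficient vector (1, -a 1, ..., -a p1)
  set abar : ℕ → ℝ := fun i => if i = 0 then 1 else -a i with habar
  have hrange : Finset.range (p1+1) = insert 0 (Finset.Icc 1 p1) := by
    ext i
    simp only [Finset.mem_range, Finset.mem_insert, Finset.mem_Icc]
    omega
  -- ehat m = x m - sum a i x (m-i), expressed with abar
  set ehat : ℤ → Ω → ℝ := fun m ω => ∑ i ∈ Finset.range (p1+1), abar i * x (m - (i:ℤ)) ω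
    with hehatdef
  have hehat1 : ∀ (m : ℤ) (ω : Ω),
      ehat m ω = x m ω - ∑ i ∈ Finset.Icc 1 p1, a i * x (m - (i:ℤ)) ω := by
    intro m ω
    have h2 : ∑ i ∈ Finset.Icc 1 p1, abar i * x (m - (i:ℤ)) ω
        = -∑ i ∈ Finset.Icc 1 p1, a i * x (m - (i:ℤ)) ω := by
      rw [← Finset.sum_neg_distrib]
      refine Finset.sum_congr rfl fun i hi => ?_
      have hi0 : i ≠ 0 := by
        simp only [Finset.mem_Icc] at hi
        omega
      rw [habar]
      simp only [if_neg hi0]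
      ring
    rw [hehatdef]
    simp only []
    rw [hrange, Finset.sum_insert (by simp), h2, habar]
    norm_num
    ring
  have hehat : ∀ m : ℤ, ehat m =ᵐ[μ] ε m := by
    intro m
    have hAR' := hAR (m - 1)
    have hm : (m : ℤ) - 1 + 1 = m := by ring
    simp only [hm] at hAR'
    filter_upwards [hAR'] with ω hω
    rw [hehat1 m ω, hω]
    ring
  -- the white-noise relations for ehat
  have hεε : ∀ s t : ℤ, ∫ ω, ehat s ω * ehat t ω ∂μ = if s = t then σ2 else 0 := by
    intro s t
    have h1 : ∫ ω, ehat s ω * ehat t ω ∂μ = ∫ ω, ε s ω * ε t ω ∂μ :=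
      integral_congr_ae ((hehat s).mul (hehat t))
    rw [h1]
    by_cases hst : s = t
    · subst hst
      rw [if_pos rfl, ← hεvar s]
      exact integral_congr_ae (Filter.Eventually.of_forall fun ω => by ring)
    · rw [if_neg hst]
      exact hεuncorr s t hst
  -- φ n = E[x_{t+n} ε_t]
  set φ : ℤ → ℝ := fun n => ∑ i ∈ Finset.range (p1+1), abar i * γ (n + (i:ℤ)) with hφdef
  have hP2 : ∀ m : ℤ, ∑ i ∈ Finset.range (p1+1), abar i * φ (m - (i:ℤ))
      = if m = 0 then σ2 else 0 := by
    intro m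
    have h1 := hεε m 0
    rw [hehatdef] at h1
    simp only [] at h1
    rw [key (Finset.range (p1+1)) (Finset.range (p1+1)) abar abar
      (fun i => m - (i:ℤ)) (fun j => 0 - (j:ℤ))] at h1
    have h2 : ∑ i ∈ Finset.range (p1+1), abar i * φ (m - (i:ℤ))
        = ∑ i ∈ Finset.range (p1+1), ∑ j ∈ Finset.range (p1+1),
            abar i * abar j * γ ((m - (i:ℤ)) - (0 - (j:ℤ))) := by
      refine Finset.sum_congr rfl fun i _ => ?_
      rw [hφdef]
      simp only []
      rw [Finset.mul_sum]
      refine Finset.sum_congr rfl fun j _ => ?_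
      rw [show (m - (i:ℤ)) - (0 - (j:ℤ)) = m - (i:ℤ) + (j:ℤ) by ring]
      ring
    rw [h2, h1]
  -- F n = sum_r b r * φ (r - n)
  set F : ℤ → ℝ := fun n => ∑ r ∈ Finset.range h, b r * φ ((r:ℤ) - n) with hFdef
  set bz : ℤ → ℝ := fun n => if 0 ≤ n ∧ n < (h:ℤ) then b n.toNat else 0 with hbzdef
  have hLF : ∀ n : ℤ, ∑ i ∈ Finset.range (p1+1), abar i * F (n + (i:ℤ)) = σ2 * bz n := by
    intro n
    have h1 : ∑ i ∈ Finset.range (p1+1), abar i * F (n + (i:ℤ))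
        = ∑ r ∈ Finset.range h, b r *
            ∑ i ∈ Finset.range (p1+1), abar i * φ (((r:ℤ) - n) - (i:ℤ)) := by
      rw [hFdef]
      simp only []
      simp only [Finset.mul_sum]
      rw [Finset.sum_comm]
      refine Finset.sum_congr rfl fun r _ => ?_
      refine Finset.sum_congr rfl fun i _ => ?_
      rw [show (r:ℤ) - (n + (i:ℤ)) = ((r:ℤ) - n) - (i:ℤ) by ring]
      ring
    rw [h1]
    have h2 : ∀ r ∈ Finset.range h, b r *
        (∑ i ∈ Finset.range (p1+1), abar i * φ (((r:ℤ) - n) - (i:ℤ)))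
        = if (r:ℤ) = n then b r * σ2 else 0 := by
      intro r _
      rw [hP2 ((r:ℤ) - n)]
      by_cases hr : (r:ℤ) = n
      · rw [if_pos (by omega), if_pos hr]
      · rw [if_neg (by omega), if_neg hr]
        ring
    rw [Finset.sum_congr rfl h2]
    by_cases hn : 0 ≤ n ∧ n < (h:ℤ)
    · have hcond : ∀ r ∈ Finset.range h, ((if (r:ℤ) = n then b r * σ2 else 0)
          = if r = n.toNat then b r * σ2 else 0) := by
        intro r _
        by_cases hr : (r:ℤ) = n
        · rw [if_pos hr, if_pos (by omega)]
        · rw [if_neg hr, if_neg (by omega)]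
      rw [Finset.sum_congr rfl hcond, Finset.sum_ite_eq' (Finset.range h) n.toNat
        (fun r => b r * σ2), if_pos (by simp only [Finset.mem_range]; omega)]
      rw [hbzdef]
      simp only [if_pos hn]
      ring
    · have hcond : ∀ r ∈ Finset.range h, ((if (r:ℤ) = n then b r * σ2 else 0) = 0) := by
        intro r hr
        simp only [Finset.mem_range] at hr
        rw [if_neg (by omega)]
      rw [Finset.sum_congr rfl hcond, Finset.sum_const_zero, hbzdef]
      simp only [if_neg hn]
      ring
  -- entrywise forms
  have hΓE : ∀ (m : ℕ) (i j : Fin m), Γ m i j = γ (((j:ℕ):ℤ) - ((i:ℕ):ℤ)) := by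
    intro m i j; rw [hΓ]
  have hCE : ∀ (m : ℕ) (i j : Fin m), C m i j = ∑ r ∈ Finset.range h, ∑ s ∈ Finset.range h,
      b r * b s * γ (((r:ℤ) - ((i:ℕ):ℤ)) - ((s:ℤ) - ((j:ℕ):ℤ))) := by
    intro m i j; rw [hC]
  have hGdet : IsUnit (Γ k).det := hpd.det_pos.ne'.isUnit
  have hGmul : Γ k * (Γ k)⁻¹ = 1 := Matrix.mul_nonsing_inv _ hGdet
  have hGT : (Γ k).transpose = Γ k := by
    ext i j
    rw [Matrix.transpose_apply, hΓE, hΓE, ← hγeven]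
    congr 1
    ring
  have hGinvT : ((Γ k)⁻¹).transpose = (Γ k)⁻¹ := by
    rw [Matrix.transpose_nonsing_inv, hGT]
  have hGinvS : ∀ i j, (Γ k)⁻¹ i j = (Γ k)⁻¹ j i := by
    intro i j
    have h1 := congrFun (congrFun hGinvT j) i
    rw [Matrix.transpose_apply] at h1
    exact h1
  set g : Fin k → ℝ := fun i => γ ((k:ℤ) - ((i:ℕ):ℤ)) with hgdef
  set u : Fin k → ℝ := Matrix.mulVec ((Γ k)⁻¹) g with hudef
  have hGu : Matrix.mulVec (Γ k) u = g := by
    rw [hudef, Matrix.mulVec_mulVec, hGmul, Matrix.one_mulVec]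
  set d : ℝ := γ 0 - dotProduct g u with hddef
  set qn : ℕ → ℝ := fun i => if hi : i < k then -u ⟨i, hi⟩ else 1 with hqndef
  set q : Fin (k+1) → ℝ := fun i => qn (i:ℕ) with hqdef
  have hqcs : ∀ l : Fin k, q l.castSucc = -u l := by
    intro l
    rw [hqdef]
    simp only [Fin.coe_castSucc]
    rw [hqndef]
    simp only []
    rw [dif_pos l.isLt, Fin.eta]
  have hqlast : q (Fin.last k) = 1 := by
    rw [hqdef]
    simp only [Fin.val_last]
    rw [hqndef]
    simp only []
    rw [dif_neg (lt_irrefl k)]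
  have hmv1 : ∀ (M : Matrix (Fin (k+1)) (Fin (k+1)) ℝ) (v : Fin (k+1) → ℝ) (i : Fin (k+1)),
      Matrix.mulVec M v i = ∑ l : Fin (k+1), M i l * v l := fun M v i => rfl
  have hmvk : ∀ (M : Matrix (Fin k) (Fin k) ℝ) (v : Fin k → ℝ) (i : Fin k),
      Matrix.mulVec M v i = ∑ l : Fin k, M i l * v l := fun M v i => rfl
  have hGq : ∀ i : Fin (k+1), Matrix.mulVec (Γ (k+1)) q i = if i = Fin.last k then d else 0 := by
    intro i
    rw [hmv1, Fin.sum_univ_castSucc]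
    induction i using Fin.lastCases with
    | last =>
      rw [if_pos rfl]
      have h1 : ∀ l : Fin k, Γ (k+1) (Fin.last k) l.castSucc * q l.castSucc = -(g l * u l) := by
        intro l
        rw [hqcs, hΓE]
        simp only [Fin.coe_castSucc, Fin.val_last]
        rw [show ((l:ℕ):ℤ) - ((k:ℕ):ℤ) = -((k:ℤ) - ((l:ℕ):ℤ)) by ring, hγeven, hgdef]
        ring
      rw [Finset.sum_congr rfl fun l _ => h1 l, hqlast, hΓE]
      simp only [Fin.val_last, sub_self]
      rw [hddef, dotProduct, Finset.sum_neg_distrib]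
      ring
    | cast j =>
      rw [if_neg (Fin.castSucc_lt_last j).ne]
      have h1 : ∀ l : Fin k, Γ (k+1) j.castSucc l.castSucc * q l.castSucc = -(Γ k j l * u l) := by
        intro l
        rw [hqcs, hΓE (k+1), hΓE k]
        simp only [Fin.coe_castSucc]
        ring
      rw [Finset.sum_congr rfl fun l _ => h1 l, hqlast, hΓE]
      simp only [Fin.coe_castSucc, Fin.val_last]
      have h2 : (∑ l : Fin k, -(Γ k j l * u l)) = -(Matrix.mulVec (Γ k) u j) := by
        rw [hmvk, Finset.sum_neg_distrib]
      rw [h2, hGu, hgdef]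
      simp only []
      ring
  have hdd : dotProduct q (Matrix.mulVec (Γ (k+1)) q) = d := by
    rw [dotProduct]
    have h1 : ∀ i ∈ Finset.univ, q i * Matrix.mulVec (Γ (k+1)) q i
        = q i * (if i = Fin.last k then d else 0) := fun i _ => by rw [hGq i]
    rw [Finset.sum_congr rfl h1, Finset.sum_eq_single (Fin.last k)]
    · rw [if_pos rfl, hqlast, one_mul]
    · intro i _ hne
      rw [if_neg hne, mul_zero]
    · intro habs
      exact absurd (Finset.mem_univ _) habs
  have hq0 : q ≠ 0 := by
    intro hq
    have h1 := congrFun hq (Fin.last k)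
    rw [hqlast] at h1
    exact one_ne_zero h1
  have hd_pos : 0 < d := by
    have h2 := hpd'.dotProduct_mulVec_pos hq0
    rw [show star q = q from funext fun i => star_trivial _] at h2
    rw [hdd] at h2
    exact h2
  have hdne : d ≠ 0 := ne_of_gt hd_pos
  -- padded inverse block
  set B : Matrix (Fin (k+1)) (Fin (k+1)) ℝ := fun i j =>
    if hi : (i:ℕ) < k then (if hj : (j:ℕ) < k then (Γ k)⁻¹ ⟨(i:ℕ), hi⟩ ⟨(j:ℕ), hj⟩ else 0) else 0
    with hBdef
  have hBcc : ∀ (l m : Fin k), B l.castSucc m.castSucc = (Γ k)⁻¹ l m := by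
    intro l m
    rw [hBdef]
    simp only [Fin.coe_castSucc]
    rw [dif_pos l.isLt, dif_pos m.isLt, Fin.eta, Fin.eta]
  have hBlast1 : ∀ i, B (Fin.last k) i = 0 := by
    intro i
    rw [hBdef]
    simp only [Fin.val_last]
    rw [dif_neg (lt_irrefl k)]
  have hBlast2 : ∀ i, B i (Fin.last k) = 0 := by
    intro i
    rw [hBdef]
    simp only [Fin.val_last]
    rcases Nat.lt_or_ge (i:ℕ) k with hi | hi
    · rw [dif_pos hi, dif_neg (lt_irrefl k)]
    · rw [dif_neg (Nat.not_lt.mpr hi)]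
  set N : Matrix (Fin (k+1)) (Fin (k+1)) ℝ := fun i j => B i j + d⁻¹ * (q i * q j) with hNdef
  have hNinv : Γ (k+1) * N = 1 := by
    ext i j
    rw [Matrix.mul_apply]
    have hsplit : ∀ l, Γ (k+1) i l * N l j
        = Γ (k+1) i l * B l j + d⁻¹ * q j * (Γ (k+1) i l * q l) := by
      intro l
      rw [hNdef]
      simp only []
      ring
    rw [Finset.sum_congr rfl fun l _ => hsplit l, Finset.sum_add_distrib]
    have hpart2 : ∑ l : Fin (k+1), d⁻¹ * q j * (Γ (k+1) i l * q l)
        = d⁻¹ * q j * (if i = Fin.last k then d else 0) := by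
      rw [← Finset.mul_sum, ← hmv1 (Γ (k+1)) q i, hGq]
    rw [hpart2]
    induction j using Fin.lastCases with
    | last =>
      have hz : ∑ l : Fin (k+1), Γ (k+1) i l * B l (Fin.last k) = 0 :=
        Finset.sum_eq_zero fun l _ => by rw [hBlast2, mul_zero]
      rw [hz, Matrix.one_apply]
      induction i using Fin.lastCases with
      | last =>
        rw [if_pos rfl, if_pos rfl, hqlast]
        field_simp
        ring
      | cast i' =>
        rw [if_neg (Fin.castSucc_lt_last i').ne, if_neg (Fin.castSucc_lt_last i').ne]
        ring
    | cast j' =>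
      rw [Fin.sum_univ_castSucc, hBlast1, mul_zero, add_zero]
      rw [Finset.sum_congr rfl fun l _ => by rw [hBcc l j']]
      induction i using Fin.lastCases with
      | cast i' =>
        have hsum : ∑ l : Fin k, Γ (k+1) i'.castSucc l.castSucc * (Γ k)⁻¹ l j'
            = (1 : Matrix (Fin k) (Fin k) ℝ) i' j' := by
          rw [← hGmul, Matrix.mul_apply]
          refine Finset.sum_congr rfl fun l _ => ?_
          rw [hΓE (k+1), hΓE k]
          simp only [Fin.coe_castSucc]
        rw [hsum, if_neg (Fin.castSucc_lt_last i').ne, Matrix.one_apply, Matrix.one_apply,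
          mul_zero, add_zero]
        by_cases hij : i' = j'
        · rw [if_pos hij, if_pos (by rw [hij])]
        · rw [if_neg hij, if_neg (fun hcc => hij (Fin.castSucc_inj.mp hcc))]
      | last =>
        have hsum : ∑ l : Fin k, Γ (k+1) (Fin.last k) l.castSucc * (Γ k)⁻¹ l j'
            = u j' := by
          have h3 : ∀ l : Fin k, Γ (k+1) (Fin.last k) l.castSucc * (Γ k)⁻¹ l j'
              = (Γ k)⁻¹ j' l * g l := by
            intro l
            rw [hΓE (k+1)]
            simp only [Fin.coe_castSucc, Fin.val_last]
            rw [show ((l:ℕ):ℤ) - ((k:ℕ):ℤ) = -((k:ℤ) - ((l:ℕ):ℤ)) by ring, hγeven,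
              ← hGinvS l j', hgdef]
            simp only []
            ring
          rw [Finset.sum_congr rfl fun l _ => h3 l, hudef, hmvk]
        rw [hsum, if_pos rfl, Matrix.one_apply,
          if_neg (Ne.symm (Fin.castSucc_lt_last j').ne), hqcs]
        field_simp
        ring
  have hGinveq : (Γ (k+1))⁻¹ = N := Matrix.inv_eq_right_inv hNinv
  have hCblock : ∀ (l m : Fin k), C (k+1) l.castSucc m.castSucc = C k l m := by
    intro l m
    rw [hCE, hCE]
    simp only [Fin.coe_castSucc]
  set Q : ℝ := dotProduct q (Matrix.mulVec (C (k+1)) q) with hQdef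
  have htrace : Matrix.trace ((Γ (k+1))⁻¹ * C (k+1))
      = Matrix.trace ((Γ k)⁻¹ * C k) + d⁻¹ * Q := by
    rw [hGinveq]
    have htr1 : Matrix.trace (N * C (k+1))
        = ∑ i : Fin (k+1), ∑ l : Fin (k+1), N i l * C (k+1) l i := by
      simp only [Matrix.trace, Matrix.diag_apply, Matrix.mul_apply]
    have htr2 : Matrix.trace ((Γ k)⁻¹ * C k)
        = ∑ i : Fin k, ∑ l : Fin k, (Γ k)⁻¹ i l * C k l i := by
      simp only [Matrix.trace, Matrix.diag_apply, Matrix.mul_apply]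
    rw [htr1, htr2]
    have hsplit : ∀ (i l : Fin (k+1)), N i l * C (k+1) l i
        = B i l * C (k+1) l i + d⁻¹ * (q i * q l * C (k+1) l i) := by
      intro i l
      rw [hNdef]
      simp only []
      ring
    simp only [hsplit, Finset.sum_add_distrib]
    have hq2 : ∑ i : Fin (k+1), ∑ l : Fin (k+1), d⁻¹ * (q i * q l * C (k+1) l i) = d⁻¹ * Q := by
      rw [Finset.sum_comm, hQdef, dotProduct, Finset.mul_sum]
      refine Finset.sum_congr rfl fun l _ => ?_
      rw [hmv1 (C (k+1)) q l, Finset.mul_sum, Finset.mul_sum]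
      refine Finset.sum_congr rfl fun i _ => ?_
      ring
    have hB2 : ∑ i : Fin (k+1), ∑ l : Fin (k+1), B i l * C (k+1) l i
        = ∑ i : Fin k, ∑ l : Fin k, (Γ k)⁻¹ i l * C k l i := by
      rw [Fin.sum_univ_castSucc]
      have hlast : ∑ l : Fin (k+1), B (Fin.last k) l * C (k+1) l (Fin.last k) = 0 :=
        Finset.sum_eq_zero fun l _ => by rw [hBlast1, zero_mul]
      rw [hlast, add_zero]
      refine Finset.sum_congr rfl fun i' _ => ?_
      rw [Fin.sum_univ_castSucc, hBlast2, zero_mul, add_zero]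
      refine Finset.sum_congr rfl fun l _ => ?_
      rw [hBcc, hCblock]
    rw [hq2, hB2]
  -- the random variable X with Q = E[X^2]
  set P : Finset (ℕ × ℕ) := Finset.range (k+1) ×ˢ Finset.range h with hPdef
  set X : Ω → ℝ := fun ω => ∑ p ∈ P, (qn p.1 * b p.2) * x ((p.2:ℤ) - (p.1:ℤ)) ω with hXdef
  have hQsum : Q = ∑ i ∈ Finset.range (k+1), ∑ j ∈ Finset.range (k+1),
      ∑ r ∈ Finset.range h, ∑ s ∈ Finset.range h,
      (qn i * b r) * (qn j * b s) * γ (((r:ℤ) - (i:ℤ)) - ((s:ℤ) - (j:ℤ))) := by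
    rw [hQdef, dotProduct]
    have step1 : ∀ i : Fin (k+1), q i * Matrix.mulVec (C (k+1)) q i
        = qn (i:ℕ) * ∑ j ∈ Finset.range (k+1), (∑ r ∈ Finset.range h, ∑ s ∈ Finset.range h,
            b r * b s * γ (((r:ℤ) - (((i:ℕ)):ℤ)) - ((s:ℤ) - ((j:ℕ):ℤ)))) * qn j := by
      intro i
      rw [hqdef]
      simp only []
      congr 1
      rw [hmv1]
      rw [← Fin.sum_univ_eq_sum_range (fun j => (∑ r ∈ Finset.range h, ∑ s ∈ Finset.range h,
            b r * b s * γ (((r:ℤ) - (((i:ℕ)):ℤ)) - ((s:ℤ) - ((j:ℕ):ℤ)))) * qn j) (k+1)]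
      refine Finset.sum_congr rfl fun j _ => ?_
      rw [hCE]
    rw [Finset.sum_congr rfl fun i _ => step1 i]
    rw [Fin.sum_univ_eq_sum_range (fun i => qn i * ∑ j ∈ Finset.range (k+1),
      (∑ r ∈ Finset.range h, ∑ s ∈ Finset.range h,
        b r * b s * γ (((r:ℤ) - ((i:ℕ):ℤ)) - ((s:ℤ) - ((j:ℕ):ℤ)))) * qn j) (k+1)]
    refine Finset.sum_congr rfl fun i _ => ?_
    rw [Finset.mul_sum]
    refine Finset.sum_congr rfl fun j _ => ?_
    rw [Finset.sum_mul, Finset.mul_sum]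
    refine Finset.sum_congr rfl fun r _ => ?_
    rw [Finset.sum_mul, Finset.mul_sum]
    refine Finset.sum_congr rfl fun s _ => ?_
    ring
  have hQint2 : Q = ∫ ω, X ω * X ω ∂μ := by
    rw [hXdef]
    simp only []
    rw [key P P (fun p => qn p.1 * b p.2) (fun p => qn p.1 * b p.2)
      (fun p => (p.2:ℤ) - (p.1:ℤ)) (fun p => (p.2:ℤ) - (p.1:ℤ))]
    rw [hPdef]
    simp only [Finset.sum_product]
    rw [hQsum]
    refine Finset.sum_congr rfl fun i _ => ?_
    rw [Finset.sum_comm]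
  have hSX : ∀ m : ℤ, ∫ ω, X ω * ehat m ω ∂μ
      = ∑ i ∈ Finset.range (k+1), qn i * F ((i:ℤ) + m) := by
    intro m
    rw [hXdef, hehatdef]
    simp only []
    rw [key P (Finset.range (p1+1)) (fun p => qn p.1 * b p.2) abar
      (fun p => (p.2:ℤ) - (p.1:ℤ)) (fun i => m - (i:ℤ))]
    rw [hPdef]
    simp only [Finset.sum_product]
    refine Finset.sum_congr rfl fun i _ => ?_
    rw [hFdef]
    simp only []
    rw [Finset.mul_sum]
    refine Finset.sum_congr rfl fun r _ => ?_
    rw [hφdef]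
    simp only []
    rw [Finset.mul_sum, Finset.mul_sum]
    refine Finset.sum_congr rfl fun β _ => ?_
    rw [show ((r:ℤ) - (i:ℤ)) - (m - (β:ℤ)) = ((r:ℤ) - ((i:ℤ) + m)) + (β:ℤ) by ring]
    ring
  have hQnn : 0 ≤ ∫ ω, X ω * X ω ∂μ := integral_nonneg fun ω => mul_self_nonneg _
  have hQne : ¬ (∫ ω, X ω * X ω ∂μ = 0) := by
    intro h0
    have hXint : Integrable (fun ω => X ω * X ω) μ := by
      rw [hXdef]
      simp only []
      exact keyInt P P _ _ _ _
    have hX0 : (fun ω => X ω * X ω) =ᵐ[μ] 0 :=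
      (integral_eq_zero_iff_of_nonneg (fun ω => mul_self_nonneg _) hXint).mp h0
    have hXz : X =ᵐ[μ] 0 := by
      filter_upwards [hX0] with ω hω
      exact mul_self_eq_zero.mp hω
    have hS : ∀ m : ℤ, ∑ i ∈ Finset.range (k+1), qn i * F ((i:ℤ) + m) = 0 := by
      intro m
      rw [← hSX m]
      have hz : (fun ω => X ω * ehat m ω) =ᵐ[μ] 0 := by
        filter_upwards [hXz] with ω hω
        simp only [Pi.zero_apply] at hω ⊢
        rw [hω, zero_mul]
      rw [integral_congr_ae hz]
      simp
    have h1 : ∑ j ∈ Finset.range (p1+1), abar j *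
        (∑ i ∈ Finset.range (k+1), qn i * F ((i:ℤ) + (-(k:ℤ) + (j:ℤ)))) = 0 := by
      refine Finset.sum_eq_zero fun j _ => ?_
      rw [hS, mul_zero]
    have h2 : ∑ j ∈ Finset.range (p1+1), abar j *
        (∑ i ∈ Finset.range (k+1), qn i * F ((i:ℤ) + (-(k:ℤ) + (j:ℤ))))
        = ∑ i ∈ Finset.range (k+1), qn i * (σ2 * bz ((i:ℤ) + -(k:ℤ))) := by
      simp only [Finset.mul_sum]
      rw [Finset.sum_comm]
      refine Finset.sum_congr rfl fun i _ => ?_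
      rw [← hLF ((i:ℤ) + -(k:ℤ))]
      rw [Finset.mul_sum]
      refine Finset.sum_congr rfl fun j _ => ?_
      rw [show (i:ℤ) + (-(k:ℤ) + (j:ℤ)) = ((i:ℤ) + -(k:ℤ)) + (j:ℤ) by ring]
      ring
    rw [h2] at h1
    rw [Finset.sum_range_succ] at h1
    have hzero : ∑ i ∈ Finset.range k, qn i * (σ2 * bz ((i:ℤ) + -(k:ℤ))) = 0 := by
      refine Finset.sum_eq_zero fun i hi => ?_
      simp only [Finset.mem_range] at hi
      have hbzz : bz ((i:ℤ) + -(k:ℤ)) = 0 := by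
        rw [hbzdef]
        simp only []
        rw [if_neg (by omega)]
      rw [hbzz]
      ring
    rw [hzero, zero_add] at h1
    have hqk : qn k = 1 := by
      rw [hqndef]
      simp only []
      rw [dif_neg (lt_irrefl k)]
    have hbz0 : bz ((k:ℤ) + -(k:ℤ)) = 1 := by
      rw [show (k:ℤ) + -(k:ℤ) = 0 by ring, hbzdef]
      simp only []
      rw [if_pos ⟨le_refl 0, by exact_mod_cast hh⟩, Int.toNat_zero, hb0]
    rw [hqk, hbz0] at h1
    -- h1 : 1 * (σ2 * 1) = 0
    nlinarith [hσ]
  have hQpos : 0 < Q := by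
    rw [hQint2]
    exact lt_of_le_of_ne hQnn (Ne.symm hQne)
  have hlt : Matrix.trace ((Γ k)⁻¹ * C k) < Matrix.trace ((Γ (k+1))⁻¹ * C (k+1)) := by
    rw [htrace]
    have hpos : 0 < d⁻¹ * Q := mul_pos (inv_pos.mpr hd_pos) hQpos
    linarith
  exact mul_lt_mul_of_pos_right hlt hσ
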